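/- Suppose that for every integer n ≥ 2 and every nonempty subset A of Z_n \ {0} whose elements sum to a nonzero value, there exists an ordering (a_1, ..., a_k) of the elements of A such that the partial sums s_j = a_1 + ... + a_j (j = 1, ..., k), computed in Z_n, are pairwise distinct and all nonzero. Then for every integer n ≥ 2 and every nonempty subset A of Z_n \ {0}, there exists an ordering of the elements of A such that all the partial sums are pairwise distinct. -/

import Mathlib

/-- The partial sums of the ordering `l` are pairwise distinct. -/
def distinctPartialSums {n : ℕ} (l : List (ZMod n)) : Prop :=
  ∀ i j : ℕ, i < j → j < l.length → (l.take (i + 1)).sum ≠ (l.take (j + 1)).sum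

/-- Alspach's conjecture (distinct *and nonzero* partial sums, for subsets with
nonzero total sum) implies the conjecture that every subset of `ZMod n \ {0}`
admits an ordering with pairwise distinct partial sums. -/
theorem alspach_implies_distinct_partial_sums
    (H : ∀ n : ℕ, 2 ≤ n → ∀ A : Finset (ZMod n), A.Nonempty → (0 : ZMod n) ∉ A →
      (∑ a ∈ A, a) ≠ 0 →
      ∃ l : List (ZMod n), l.Nodup ∧ l.toFinset = A ∧ distinctPartialSums l ∧
        ∀ j : ℕ, j < l.length → (l.take (j + 1)).sum ≠ 0) :
    ∀ n : ℕ, 2 ≤ n → ∀ A : Finset (ZMod n), A.Nonempty → (0 : ZMod n) ∉ A →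
      ∃ l : List (ZMod n), l.Nodup ∧ l.toFinset = A ∧ distinctPartialSums l := by
  intro n hn A hA h0
  by_cases hs : (∑ a ∈ A, a) = 0
  · obtain ⟨a, ha⟩ := hA
    have ha0 : a ≠ 0 := fun h => h0 (h ▸ ha)
    set A' := A.erase a with hA'def
    have h0' : (0 : ZMod n) ∉ A' := fun h => h0 (Finset.mem_of_mem_erase h)
    have hsum' : ∑ x ∈ A', x = -a := by
      have h := Finset.add_sum_erase A id ha
      simp only [id] at h
      rw [← hA'def] at h
      rw [hs] at h
      linear_combination h
    have hne : ∑ x ∈ A', x ≠ 0 := by rw [hsum']; simpa using ha0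
    have hA'ne : A'.Nonempty := by
      rw [Finset.nonempty_iff_ne_empty]
      intro h
      rw [h, Finset.sum_empty] at hsum'
      exact ha0 (neg_eq_zero.mp hsum'.symm)
    obtain ⟨l, hnd, htf, hdps, hnz⟩ := H n hn A' hA'ne h0' hne
    have hal : a ∉ l := by
      intro h
      have : a ∈ A' := by rw [← htf]; exact List.mem_toFinset.mpr h
      exact Finset.notMem_erase a A this
    have hlsum : l.sum = -a := by
      have := List.sum_toFinset id hnd
      rw [htf, List.map_id] at this
      rw [← this]
      simpa using hsum'
    refine ⟨l ++ [a], ?_, ?_, ?_⟩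
    · simp [List.nodup_append, hnd, hal]
      rintro x hx rfl; exact hal hx
    · rw [List.toFinset_append]
      simp only [List.toFinset_cons, List.toFinset_nil, LawfulSingleton.insert_empty_eq]
      rw [Finset.union_comm, ← Finset.insert_eq, htf, hA'def, Finset.insert_erase ha]
    · intro i j hij hj
      simp only [List.length_append, List.length_cons, List.length_nil] at hj
      have htake : ∀ k : ℕ, k < l.length → (l ++ [a]).take (k + 1) = l.take (k + 1) := by
        intro k hk
        exact List.take_append_of_le_length (by omega)
      rcases lt_or_eq_of_le (Nat.lt_succ_iff.mp hj) with hjl | hjl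
      · rw [htake i (lt_trans hij hjl), htake j hjl]
        exact hdps i j hij hjl
      · have hi : i < l.length := by omega
        rw [htake i hi]
        have : (l ++ [a]).take (j + 1) = l ++ [a] := by
          apply List.take_of_length_le
          simp [hjl]
        rw [this, List.sum_append]
        simp only [List.sum_cons, List.sum_nil, add_zero]
        rw [hlsum]
        simpa using hnz i hi
  · obtain ⟨l, hnd, htf, hdps, _⟩ := H n hn A hA h0 hs
    exact ⟨l, hnd, htf, hdps⟩
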